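/- Let n ≥ 1, let a₁,…,aₙ be distinct variables not free in the λ-term N, and suppose N a₁ a₂ ⋯ aₙ =β (a₁ a₂ ⋯ aₙ)(N a₁ a₂ ⋯ aₙ) (all applications associating to the left). Then N I⋯I, i.e. N applied to n−1 copies of I, is an fpc. -/

import Mathlib

/-- Untyped λ-terms in de Bruijn notation (the variables are `ℕ`). -/
inductive Lam : Type
  | var : ℕ → Lam
  | app : Lam → Lam → Lam
  | abs : Lam → Lam
  deriving DecidableEq

namespace Lam

/-- Shift the free de Bruijn indices `≥ d` up by one. -/
def lift (d : ℕ) : Lam → Lam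
  | var n => if n < d then var n else var (n + 1)
  | app s t => app (lift d s) (lift d t)
  | abs t => abs (lift (d + 1) t)

/-- Capture-avoiding substitution `t[k := u]`. -/
def subst : Lam → ℕ → Lam → Lam
  | var n, k, u => if n < k then var n else if n = k then u else var (n - 1)
  | app s t, k, u => app (subst s k u) (subst t k u)
  | abs t, k, u => abs (subst t (k + 1) (lift 0 u))

/-- One-step β-reduction `→β`: the compatible closure of the β-rule. -/
inductive Beta : Lam → Lam → Prop
  | beta (t u : Lam) : Beta (Lam.app (Lam.abs t) u) (subst t 0 u)
  | appL {s s' : Lam} (t : Lam) : Beta s s' → Beta (Lam.app s t) (Lam.app s' t)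
  | appR (s : Lam) {t t' : Lam} : Beta t t' → Beta (Lam.app s t) (Lam.app s t')
  | abs {t t' : Lam} : Beta t t' → Beta (Lam.abs t) (Lam.abs t')

/-- `↠β`: the reflexive–transitive closure of `→β`. -/
def BetaStar : Lam → Lam → Prop := Relation.ReflTransGen Beta

/-- `→β^k`: the `k`-fold composition of `→β`. -/
def BetaN : ℕ → Lam → Lam → Prop
  | 0, s, t => s = t
  | k + 1, s, t => ∃ u, Beta s u ∧ BetaN k u t

/-- `=β`, β-convertibility: the equivalence closure of `→β`. -/
inductive Conv : Lam → Lam → Prop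
  | rel {s t : Lam} : Beta s t → Conv s t
  | refl (s : Lam) : Conv s s
  | symm {s t : Lam} : Conv s t → Conv t s
  | trans {s t u : Lam} : Conv s t → Conv t u → Conv s u

/-- The free variables of a term (as de Bruijn indices). -/
def FV : Lam → Finset ℕ
  | var n => {n}
  | app s t => FV s ∪ FV t
  | abs t => ((FV t).erase 0).image (· - 1)

/-- `Y` is a fixed point combinator (fpc): `Y x =β x (Y x)` for a variable `x` not free in `Y`. -/
def IsFPC (Y : Lam) : Prop :=
  ∀ x : ℕ, x ∉ FV Y → Conv (app Y (var x)) (app (var x) (app Y (var x)))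

/-- `I = λx.x` -/
def combI : Lam := abs (var 0)

/-- `S = λxyz.xz(yz)` -/
def combS : Lam := abs (abs (abs (app (app (var 2) (var 0)) (app (var 1) (var 0)))))

/-- `B = λxyz.x(yz)` -/
def combB : Lam := abs (abs (abs (app (var 2) (app (var 1) (var 0)))))

/-- `δ = λab.b(ab)` -/
def delta : Lam := abs (abs (app (var 0) (app (var 1) (var 0))))

/-- `η = λxf.f(xxf)` -/
def etaC : Lam := abs (abs (app (var 0) (app (app (var 1) (var 1)) (var 0))))

/-- Curry's fpc `Y₀ = λf.(λx.f(xx))(λx.f(xx))` -/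
def curryY : Lam :=
  abs (app (abs (app (var 1) (app (var 0) (var 0))))
    (abs (app (var 1) (app (var 0) (var 0)))))

/-- `A B ⋯ B`: `A` applied to `n` copies of `B`, associating to the left. -/
def appN (A B : Lam) : ℕ → Lam
  | 0 => A
  | n + 1 => app (appN A B n) B

/-- `M N₁ ⋯ Nₘ`: `M` applied to the terms in `L`, associating to the left. -/
def appList (M : Lam) (L : List Lam) : Lam := L.foldl app M

lemma lift_lift : ∀ (t : Lam) (i j : ℕ), i ≤ j →
    lift i (lift j t) = lift (j+1) (lift i t) := by
  intro t
  induction t with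
  | var n =>
    intro i j h
    simp only [lift]
    split_ifs <;> simp only [lift] <;> split_ifs <;> first | rfl | omega
  | app s t ihs iht => intro i j h; simp only [lift, ihs _ _ h, iht _ _ h]
  | abs t ih => intro i j h; simp only [lift, ih (i+1) (j+1) (by omega)]

lemma lift_subst : ∀ (t : Lam) (k d : ℕ) (u : Lam), k ≤ d →
    lift d (subst t k u) = subst (lift (d+1) t) k (lift d u) := by
  intro t
  induction t with
  | var n =>
    intro k d u h
    simp only [lift, subst]
    split_ifs <;> simp only [lift, subst] <;> split_ifs <;>
      first | rfl | omega | (congr 1; omega)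
  | app s t ihs iht => intro k d u h; simp only [lift, subst, ihs _ _ _ h, iht _ _ _ h]
  | abs t ih =>
    intro k d u h
    simp only [lift, subst, ih (k+1) (d+1) (lift 0 u) (by omega), lift_lift u 0 d (by omega)]

lemma lift_subst' : ∀ (t : Lam) (k d : ℕ) (u : Lam), d ≤ k →
    lift d (subst t k u) = subst (lift d t) (k+1) (lift d u) := by
  intro t
  induction t with
  | var n =>
    intro k d u h
    simp only [lift, subst]
    split_ifs <;> simp only [lift, subst] <;> split_ifs <;>
      first | rfl | omega | (congr 1; omega)
  | app s t ihs iht => intro k d u h; simp only [lift, subst, ihs _ _ _ h, iht _ _ _ h]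
  | abs t ih =>
    intro k d u h
    simp only [lift, subst, ih (k+1) (d+1) (lift 0 u) (by omega), lift_lift u 0 d (by omega)]

lemma subst_lift_self : ∀ (t : Lam) (j : ℕ) (u : Lam), subst (lift j t) j u = t := by
  intro t
  induction t with
  | var n =>
    intro j u
    simp only [lift, subst]
    split_ifs <;> simp only [subst] <;> split_ifs <;> first | rfl | omega | (congr 1; omega)
  | app s t ihs iht => intro j u; simp only [lift, subst, ihs, iht]
  | abs t ih => intro j u; simp only [lift, subst, ih]

lemma subst_subst : ∀ (t : Lam) (j k : ℕ) (u v : Lam), j ≤ k →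
    subst (subst t j v) k u = subst (subst t (k+1) (lift j u)) j (subst v k u) := by
  intro t
  induction t with
  | var n =>
    intro j k u v h
    simp only [subst]
    split_ifs <;> (try simp only [subst, subst_lift_self]) <;> (try split_ifs) <;>
      first | rfl | omega | (congr 1; omega)
  | app s t ihs iht => intro j k u v h; simp only [subst, ihs _ _ _ _ h, iht _ _ _ _ h]
  | abs t ih =>
    intro j k u v h
    simp only [subst, ih (j+1) (k+1) (lift 0 u) (lift 0 v) (by omega),
      lift_lift u 0 j (by omega), lift_subst' v k 0 u (by omega)]




lemma beta_lift {t t' : Lam} (h : Beta t t') : ∀ d, Beta (lift d t) (lift d t') := by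
  induction h with
  | beta t u =>
    intro d
    rw [lift_subst t 0 d u (by omega)]
    exact Beta.beta (lift (d+1) t) (lift d u)
  | appL t _ ih => intro d; exact Beta.appL _ (ih d)
  | appR s _ ih => intro d; exact Beta.appR _ (ih d)
  | abs _ ih => intro d; exact Beta.abs (ih (d+1))

lemma beta_subst {t t' : Lam} (h : Beta t t') : ∀ k u, Beta (subst t k u) (subst t' k u) := by
  induction h with
  | beta t u =>
    intro k v
    rw [subst_subst t 0 k v u (by omega)]
    exact Beta.beta _ _
  | appL t _ ih => intro k u; exact Beta.appL _ (ih k u)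
  | appR s _ ih => intro k u; exact Beta.appR _ (ih k u)
  | abs _ ih => intro k u; exact Beta.abs (ih (k+1) (lift 0 u))

lemma conv_lift {s t : Lam} (h : Conv s t) (d : ℕ) : Conv (lift d s) (lift d t) := by
  induction h with
  | rel h => exact Conv.rel (beta_lift h d)
  | refl s => exact Conv.refl _
  | symm _ ih => exact ih.symm
  | trans _ _ ih1 ih2 => exact ih1.trans ih2

lemma conv_subst {s t : Lam} (h : Conv s t) (k : ℕ) (u : Lam) :
    Conv (subst s k u) (subst t k u) := by
  induction h with
  | rel h => exact Conv.rel (beta_subst h k u)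
  | refl s => exact Conv.refl _
  | symm _ ih => exact ih.symm
  | trans _ _ ih1 ih2 => exact ih1.trans ih2

lemma conv_appL {s s' : Lam} (h : Conv s s') (t : Lam) : Conv (app s t) (app s' t) := by
  induction h with
  | rel h => exact Conv.rel (Beta.appL _ h)
  | refl s => exact Conv.refl _
  | symm _ ih => exact ih.symm
  | trans _ _ ih1 ih2 => exact ih1.trans ih2

lemma conv_appR (s : Lam) {t t' : Lam} (h : Conv t t') : Conv (app s t) (app s t') := by
  induction h with
  | rel h => exact Conv.rel (Beta.appR _ h)
  | refl s => exact Conv.refl _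
  | symm _ ih => exact ih.symm
  | trans _ _ ih1 ih2 => exact ih1.trans ih2

/-- Non-shifting substitution of the free variable `k` by `u`. -/
def sf (t : Lam) (k : ℕ) (u : Lam) : Lam := subst (lift (k+1) t) k u

lemma sf_app (s t : Lam) (k : ℕ) (u : Lam) :
    sf (app s t) k u = app (sf s k u) (sf t k u) := rfl

lemma sf_var_self (k : ℕ) (u : Lam) : sf (var k) k u = u := by
  simp [sf, lift, subst]

lemma sf_var_ne {j k : ℕ} (h : j ≠ k) (u : Lam) : sf (var j) k u = var j := by
  simp only [sf, lift, subst]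
  split_ifs <;> (try simp only [subst]) <;> (try split_ifs) <;>
    first | rfl | omega | (congr 1; omega)

lemma conv_sf {s t : Lam} (h : Conv s t) (k : ℕ) (u : Lam) :
    Conv (sf s k u) (sf t k u) :=
  conv_subst (conv_lift h (k+1)) k u

lemma sf_fresh : ∀ (t : Lam) (k : ℕ) (u : Lam), k ∉ FV t → sf t k u = t := by
  intro t
  induction t with
  | var n =>
    intro k u hk
    have : n ≠ k := by simpa [FV, eq_comm] using hk
    exact sf_var_ne this u
  | app s t ihs iht =>
    intro k u hk
    simp only [FV, Finset.mem_union] at hk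
    push_neg at hk
    rw [sf_app, ihs _ _ hk.1, iht _ _ hk.2]
  | abs t ih =>
    intro k u hk
    have h2 : (k+1) ∉ FV t := by
      intro hmem
      exact hk (by
        simp only [FV, Finset.mem_image]
        exact ⟨k+1, Finset.mem_erase.2 ⟨by omega, hmem⟩, rfl⟩)
    show abs (subst (lift (k+2) t) (k+1) (lift 0 u)) = abs t
    rw [show (k+2) = (k+1)+1 from rfl]
    exact congrArg abs (ih (k+1) (lift 0 u) h2)


lemma fv_combI : FV combI = ∅ := rfl

lemma fv_appList_subset : ∀ (L : List Lam) (M : Lam), FV M ⊆ FV (appList M L) := by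
  intro L
  induction L with
  | nil => intro M; exact subset_rfl
  | cons l L ih =>
    intro M
    have : FV M ⊆ FV (app M l) := by simp [FV]
    exact this.trans (ih (app M l))

lemma notmem_fv_appList : ∀ (L : List Lam) (M : Lam) (k : ℕ),
    k ∉ FV M → (∀ l ∈ L, k ∉ FV l) → k ∉ FV (appList M L) := by
  intro L
  induction L with
  | nil => intro M k hM _; exact hM
  | cons l L ih =>
    intro M k hM hL
    refine ih (app M l) k ?_ (fun l' hl' => hL l' (List.mem_cons_of_mem _ hl'))
    simp only [FV, Finset.mem_union]
    push_neg
    exact ⟨hM, hL l (List.mem_cons_self)⟩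

lemma appList_append (M : Lam) (L1 L2 : List Lam) :
    appList M (L1 ++ L2) = appList (appList M L1) L2 := by
  simp [appList, List.foldl_append]

lemma sf_appList : ∀ (L : List Lam) (M : Lam) (k : ℕ) (u : Lam),
    sf (appList M L) k u = appList (sf M k u) (L.map (fun t => sf t k u)) := by
  intro L
  induction L with
  | nil => intros; rfl
  | cons l L ih =>
    intro M k u
    show sf (appList (app M l) L) k u = appList (sf M k u) (sf l k u :: L.map _)
    rw [ih (app M l) k u, sf_app]
    rfl

/-- Fold of `sf · v combI` over a list of variables. -/
def Phi (vs : List ℕ) (t : Lam) : Lam := vs.foldl (fun s v => sf s v combI) t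

lemma Phi_cons (v : ℕ) (vs : List ℕ) (t : Lam) : Phi (v :: vs) t = Phi vs (sf t v combI) := rfl

lemma Phi_app : ∀ (vs : List ℕ) (s t : Lam), Phi vs (app s t) = app (Phi vs s) (Phi vs t) := by
  intro vs
  induction vs with
  | nil => intros; rfl
  | cons v vs ih => intro s t; rw [Phi_cons, sf_app, ih, Phi_cons, Phi_cons]

lemma Phi_fresh : ∀ (vs : List ℕ) (t : Lam), (∀ v ∈ vs, v ∉ FV t) → Phi vs t = t := by
  intro vs
  induction vs with
  | nil => intros; rfl
  | cons v vs ih =>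
    intro t h
    rw [Phi_cons, sf_fresh t v combI (h v (List.mem_cons_self))]
    exact ih t (fun v' hv' => h v' (List.mem_cons_of_mem _ hv'))

lemma Phi_var_notmem {w : ℕ} {vs : List ℕ} (h : w ∉ vs) : Phi vs (var w) = var w :=
  Phi_fresh vs (var w) (by intro v hv; simp only [FV, Finset.mem_singleton]; rintro rfl; exact h hv)

lemma Phi_conv {s t : Lam} (h : Conv s t) : ∀ vs : List ℕ, Conv (Phi vs s) (Phi vs t) := by
  intro vs
  induction vs generalizing s t with
  | nil => exact h
  | cons v vs ih => rw [Phi_cons, Phi_cons]; exact ih (conv_sf h v combI)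

lemma Phi_main : ∀ (vs : List ℕ) (M : Lam), vs.Nodup → (∀ v ∈ vs, v ∉ FV M) →
    Phi vs (appList M (vs.map var)) = appList M (List.replicate vs.length combI) := by
  intro vs
  induction vs with
  | nil => intros; rfl
  | cons v vs ih =>
    intro M hnd hf
    have hv : v ∉ vs := (List.nodup_cons.1 hnd).1
    rw [List.map_cons, show appList M (var v :: vs.map var) = appList (app M (var v)) (vs.map var) from rfl,
      Phi_cons, sf_appList, sf_app, sf_fresh M v combI (hf v (List.mem_cons_self)), sf_var_self]
    have hmap : (vs.map var).map (fun t => sf t v combI) = vs.map var := by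
      rw [List.map_map]
      apply List.map_congr_left
      intro v' hv'
      exact sf_var_ne (by rintro rfl; exact hv hv') combI
    rw [hmap, ih (app M combI) (List.nodup_cons.1 hnd).2 ?_]
    · rfl
    · intro v' hv'
      simp only [FV, Finset.mem_union]
      push_neg
      exact ⟨hf v' (List.mem_cons_of_mem _ hv'), by simp [fv_combI]⟩

lemma conv_Ichain : ∀ m : ℕ, Conv (appList combI (List.replicate m combI)) combI := by
  intro m
  induction m with
  | zero => exact Conv.refl _
  | succ m ih =>
    have h1 : List.replicate (m+1) combI = List.replicate m combI ++ [combI] := by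
      rw [List.replicate_succ']
    rw [h1, appList_append]
    show Conv (app (appList combI (List.replicate m combI)) combI) combI
    refine Conv.trans (conv_appL ih combI) ?_
    have := Beta.beta (var 0) combI
    simpa [subst, combI] using Conv.rel this

lemma conv_Ichain_x (m : ℕ) (x : ℕ) :
    Conv (app (appList combI (List.replicate m combI)) (var x)) (var x) := by
  refine Conv.trans (conv_appL (conv_Ichain m) (var x)) ?_
  have := Beta.beta (var 0) (var x)
  simpa [subst, combI] using Conv.rel this

/-- if `N a₁ ⋯ aₙ =β (a₁ ⋯ aₙ)(N a₁ ⋯ aₙ)` for distinct variables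
    `a₁,…,aₙ` (`n ≥ 1`) not free in `N`, then `N I⋯I` (`n-1` copies of `I`) is an fpc.
    Here the list `a :: rest` is the list of variables `a₁,…,aₙ`. -/
theorem pre_fpc_gives_fpc (N : Lam) (a : ℕ) (rest : List ℕ)
    (hdistinct : (a :: rest).Nodup)
    (hfresh : ∀ x ∈ a :: rest, x ∉ FV N)
    (heq : Conv (appList N ((a :: rest).map var))
      (app (appList (var a) (rest.map var)) (appList N ((a :: rest).map var)))) :
    IsFPC (appList N (List.replicate rest.length combI)) := by
  intro x hx
  clear hx
  cases rest with
  | nil =>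
    have ha : a ∉ FV N := hfresh a (List.mem_cons_self)
    have h := conv_sf heq a (var x)
    simp only [appList, List.map_cons, List.map_nil, List.foldl_cons, List.foldl_nil,
      List.length_nil, List.replicate_zero] at h ⊢
    rw [sf_app, sf_app, sf_app, sf_var_self, sf_fresh N a (var x) ha] at h
    exact h
  | cons r rs =>
    have hne : (r :: rs : List ℕ) ≠ [] := by simp
    obtain ⟨ds, w, hsplit⟩ : ∃ ds w, r :: rs = ds ++ [w] :=
      ⟨(r::rs).dropLast, (r::rs).getLast hne, (List.dropLast_append_getLast hne).symm⟩
    rw [hsplit] at hdistinct hfresh heq ⊢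
    have hand := List.nodup_cons.1 hdistinct
    have hads : a ∉ ds := fun h => hand.1 (List.mem_append.2 (Or.inl h))
    have haw : a ≠ w := fun h => hand.1 (List.mem_append.2 (Or.inr (by simp [h])))
    have hds : ds.Nodup := hand.2.of_append_left
    have hwds : w ∉ ds := fun h =>
      (List.disjoint_of_nodup_append hand.2) h (by simp)
    have hvs_nodup : (a :: ds).Nodup := List.nodup_cons.2 ⟨hads, hds⟩
    have hw_notin : w ∉ a :: ds := by
      simp only [List.mem_cons]; push_neg; exact ⟨fun h => haw h.symm, hwds⟩
    have hfreshvs : ∀ v ∈ a :: ds, v ∉ FV N := by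
      intro v hv
      rcases List.mem_cons.1 hv with h | h
      · exact hfresh v (h ▸ List.mem_cons_self)
      · exact hfresh v (List.mem_cons_of_mem _ (List.mem_append.2 (Or.inl h)))
    have hwN : w ∉ FV N := hfresh w (List.mem_cons_of_mem _ (by simp))
    -- compute Phi on the left term
    have eL : Phi (a::ds) (appList N ((a :: (ds ++ [w])).map var))
        = app (appList N (List.replicate (a::ds).length combI)) (var w) := by
      rw [show (a :: (ds ++ [w])) = (a :: ds) ++ [w] from rfl, List.map_append, appList_append,
        show ∀ X : Lam, appList X (List.map var [w]) = app X (var w) from fun X => rfl,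
        Phi_app, Phi_main _ _ hvs_nodup hfreshvs, Phi_var_notmem hw_notin]
    have eR : Phi (a::ds) (appList (var a) ((ds ++ [w]).map var))
        = app (appList combI (List.replicate ds.length combI)) (var w) := by
      rw [List.map_append, appList_append,
        show ∀ X : Lam, appList X (List.map var [w]) = app X (var w) from fun X => rfl,
        Phi_app, Phi_var_notmem hw_notin]
      congr 1
      rw [Phi_cons, sf_appList, sf_var_self]
      have hmap : (ds.map var).map (fun t => sf t a combI) = ds.map var := by
        rw [List.map_map]
        apply List.map_congr_left
        intro v hv
        exact sf_var_ne (by rintro rfl; exact hads hv) combI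
      rw [hmap, Phi_main ds combI hds (by intro v _; simp [FV, combI])]
    have key := conv_sf (Phi_conv heq (a::ds)) w (var x)
    rw [Phi_app, eL, eR] at key
    simp only [sf_app, sf_var_self] at key
    have hfY : w ∉ FV (appList N (List.replicate (a::ds).length combI)) :=
      notmem_fv_appList _ _ _ hwN
        (fun l hl => by rw [List.eq_of_mem_replicate hl, fv_combI]; simp)
    have hfC : w ∉ FV (appList combI (List.replicate ds.length combI)) :=
      notmem_fv_appList _ _ _ (by rw [fv_combI]; simp)
        (fun l hl => by rw [List.eq_of_mem_replicate hl, fv_combI]; simp)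
    rw [sf_fresh _ _ _ hfY, sf_fresh _ _ _ hfC] at key
    have hlen : (ds ++ [w]).length = (a::ds).length := by simp
    rw [hlen]
    exact key.trans (conv_appL (conv_Ichain_x ds.length x) _)


end Lam
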